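/- Let H be a real inner product space, let K ⊆ H be a convex set containing 0, and let D ∈ H. Suppose y ∈ K maximizes B ↦ ⟨D, B⟩ − ‖B‖² over K and x ∈ K maximizes B ↦ 2⟨D, B⟩ − ‖B‖² over K. Then 3·(2⟨D, x⟩ − ‖x‖²) ≤ 4·(2⟨D, y⟩ − ‖y‖²). In particular, if 2⟨D, y⟩ − ‖y‖² > 0 then the ratio (2⟨D, x⟩ − ‖x‖²)/(2⟨D, y⟩ − ‖y‖²) is at most 4/3. -/

import Mathlib

open RealInnerProductSpace

/-- Price of Anarchy bound 4/3 for linear price functions, abstract inner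
product space form: if `y` maximizes `B ↦ ⟪D,B⟫ - ‖B‖²` and `x` maximizes
`B ↦ 2⟪D,B⟫ - ‖B‖²` over a convex set `K` containing `0`, then
`3·(2⟪D,x⟫ - ‖x‖²) ≤ 4·(2⟪D,y⟫ - ‖y‖²)`, and hence the ratio is at most `4/3`. -/
theorem stmt0 {H : Type*} [NormedAddCommGroup H] [InnerProductSpace ℝ H]
    (K : Set H) (hK : Convex ℝ K) (h0 : (0 : H) ∈ K) (D : H)
    (y : H) (hyK : y ∈ K)
    (hymax : ∀ B ∈ K, ⟪D, B⟫ - ‖B‖ ^ 2 ≤ ⟪D, y⟫ - ‖y‖ ^ 2)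
    (x : H) (hxK : x ∈ K)
    (hxmax : ∀ B ∈ K, 2 * ⟪D, B⟫ - ‖B‖ ^ 2 ≤ 2 * ⟪D, x⟫ - ‖x‖ ^ 2) :
    3 * (2 * ⟪D, x⟫ - ‖x‖ ^ 2) ≤ 4 * (2 * ⟪D, y⟫ - ‖y‖ ^ 2) ∧
    (0 < 2 * ⟪D, y⟫ - ‖y‖ ^ 2 →
      (2 * ⟪D, x⟫ - ‖x‖ ^ 2) / (2 * ⟪D, y⟫ - ‖y‖ ^ 2) ≤ 4 / 3) := by
  -- Step 1: variational inequality for `y` along the segment to `x`.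
  have key : ∀ t : ℝ, 0 < t → t ≤ 1 →
      ⟪D, x⟫ - ⟪D, y⟫ - 2 * ⟪y, x⟫ + 2 * ‖y‖ ^ 2 ≤ t * ‖x - y‖ ^ 2 := by
    intro t ht ht1
    have hz : (1 - t) • y + t • x ∈ K := hK hyK hxK (by linarith) ht.le (by ring)
    have h := hymax _ hz
    have e1 : ‖(1 - t) • y + t • x‖ ^ 2
        = (1-t)^2 * ‖y‖^2 + 2*(1-t)*t*⟪y, x⟫ + t^2 * ‖x‖^2 := by
      rw [← real_inner_self_eq_norm_sq, ← real_inner_self_eq_norm_sq,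
        ← real_inner_self_eq_norm_sq]
      simp only [inner_add_left, inner_add_right, real_inner_smul_left,
        real_inner_smul_right, real_inner_comm x y]
      ring
    have e2 : ⟪D, (1 - t) • y + t • x⟫ = (1 - t) * ⟪D, y⟫ + t * ⟪D, x⟫ := by
      simp [inner_add_right, real_inner_smul_right]
    have e3 : ‖x - y‖ ^ 2 = ‖x‖^2 - 2 * ⟪y, x⟫ + ‖y‖^2 := by
      rw [← real_inner_self_eq_norm_sq, ← real_inner_self_eq_norm_sq,
        ← real_inner_self_eq_norm_sq]
      simp only [inner_sub_left, inner_sub_right, real_inner_comm x y]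
      ring
    rw [e1, e2] at h
    rw [e3]
    have h' : t * (⟪D, x⟫ - ⟪D, y⟫ - 2 * ⟪y, x⟫ + 2 * ‖y‖ ^ 2)
        ≤ t * (t * (‖x‖^2 - 2 * ⟪y, x⟫ + ‖y‖^2)) := by nlinarith
    exact le_of_mul_le_mul_left h' ht
  have hA : ⟪D, x⟫ - ⟪D, y⟫ - 2 * ⟪y, x⟫ + 2 * ‖y‖ ^ 2 ≤ 0 := by
    by_contra hc
    push_neg at hc
    set A := ⟪D, x⟫ - ⟪D, y⟫ - 2 * ⟪y, x⟫ + 2 * ‖y‖ ^ 2 with hAdef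
    set N := ‖x - y‖ ^ 2 with hNdef
    have hNnn : (0:ℝ) ≤ N := by positivity
    have hN0 : 0 < N := by
      rcases hNnn.lt_or_eq with h | h
      · exact h
      · have h1 := key 1 one_pos le_rfl
        rw [← h] at h1
        linarith
    have ht0 : 0 < min 1 (A / (2 * N)) :=
      lt_min one_pos (div_pos hc (by linarith))
    have hk := key _ ht0 (min_le_left _ _)
    have h2 : min 1 (A / (2 * N)) * N ≤ (A / (2 * N)) * N :=
      mul_le_mul_of_nonneg_right (min_le_right _ _) hNnn
    have h3 : (A / (2 * N)) * N = A / 2 := by field_simp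
    linarith
  -- Step 2: `2⟪D,x⟫ - ‖x‖² ≤ 2⟪D,y⟫`, using `‖x - 2y‖² ≥ 0`.
  have hsq : (0:ℝ) ≤ ‖x‖ ^ 2 - 4 * ⟪y, x⟫ + 4 * ‖y‖ ^ 2 := by
    have h := real_inner_self_nonneg (x := x - (2:ℝ) • y)
    have e : ⟪x - (2:ℝ) • y, x - (2:ℝ) • y⟫
        = ‖x‖ ^ 2 - 4 * ⟪y, x⟫ + 4 * ‖y‖ ^ 2 := by
      simp only [inner_sub_left, inner_sub_right, real_inner_smul_left,
        real_inner_smul_right, real_inner_self_eq_norm_sq, real_inner_comm x y]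
      rw [norm_smul]
      norm_num [mul_pow]
      ring
    linarith [e ▸ h]
  have h1 : 2 * ⟪D, x⟫ - ‖x‖ ^ 2 ≤ 2 * ⟪D, y⟫ := by linarith
  -- Step 3: `hymax` at `x/2`.
  have hhalf : (1/2 : ℝ) • x ∈ K := by
    have := hK h0 hxK (by norm_num : (0:ℝ) ≤ 1/2) (by norm_num : (0:ℝ) ≤ 1/2)
      (by norm_num)
    simpa using this
  have h2' := hymax _ hhalf
  have e4 : ‖(1/2 : ℝ) • x‖ ^ 2 = (1/4) * ‖x‖ ^ 2 := by
    rw [norm_smul, mul_pow]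
    norm_num
  have e5 : ⟪D, (1/2 : ℝ) • x⟫ = (1/2) * ⟪D, x⟫ := by
    simp [real_inner_smul_right]
  rw [e4, e5] at h2'
  have h2 : 2 * ⟪D, x⟫ - ‖x‖ ^ 2 ≤ 4 * (⟪D, y⟫ - ‖y‖ ^ 2) := by linarith
  -- Combine: 3·f(x) = 2·f(x) + f(x) ≤ 2·(2q) + (4q - 4v) = 8q - 4v.
  have main : 3 * (2 * ⟪D, x⟫ - ‖x‖ ^ 2) ≤ 4 * (2 * ⟪D, y⟫ - ‖y‖ ^ 2) := by
    linarith
  refine ⟨main, fun hpos => ?_⟩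
  rw [div_le_div_iff₀ hpos (by norm_num : (0:ℝ) < 3)]
  linarith
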